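/- There exists an injective continuous map f : ℝ → ℝ² on [0,1] with f 0 = (0,0) and f 1 = (1,0) such that ‖f t₁ − f t₂‖ ≥ |t₁ − t₂| / 3 for all t₁, t₂ ∈ [0,1], and whose length is infinite: eVariationOn f (Set.Icc 0 1) = ⊤. Hence there is a simple (non-rectifiable) arc of infinite length admitting a parametrization that is bi-Lipschitz from below. (The geometric content of Theorem 2.2, proved via a Koch-type construction.) -/

import Mathlib

local notation "ℝ²" => EuclideanSpace ℝ (Fin 2)

noncomputable def gg (t : ℝ) : ℝ := t * (1 - t) * Real.sin (1 / t)

noncomputable def tn (n : ℕ) : ℝ := 2 / (Real.pi * (2 * n + 1))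

lemma tn_pos (n : ℕ) : 0 < tn n := by
  unfold tn
  have := Real.pi_pos
  positivity

lemma tn_anti : Antitone tn := by
  intro m k h
  unfold tn
  have hπ := Real.pi_pos
  have hmk : (m : ℝ) ≤ k := Nat.cast_le.2 h
  gcongr

lemma tn_le (n : ℕ) : tn n ≤ 2 / 3 := by
  have h0 : tn n ≤ tn 0 := tn_anti (Nat.zero_le n)
  have h1 : tn 0 = 2 / Real.pi := by unfold tn; norm_num
  have h3 := Real.pi_gt_three
  have : (2 : ℝ) / Real.pi ≤ 2 / 3 := by
    apply div_le_div_of_nonneg_left (by norm_num) (by norm_num)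
    linarith
  linarith [h1 ▸ h0]

lemma sin_shift (n : ℕ) : Real.sin (Real.pi / 2 + n * Real.pi) = (-1) ^ n := by
  induction n with
  | zero => simp
  | succ n ih =>
    have h : Real.pi / 2 + ((n : ℝ) + 1) * Real.pi
        = (Real.pi / 2 + n * Real.pi) + Real.pi := by ring
    push_cast
    rw [h, Real.sin_add_pi, ih, pow_succ]
    ring

lemma one_div_tn (n : ℕ) : 1 / tn n = Real.pi / 2 + n * Real.pi := by
  unfold tn
  rw [one_div_div]
  ring

lemma gg_tn (n : ℕ) : gg (tn n) = (-1) ^ n * (tn n * (1 - tn n)) := by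
  unfold gg
  rw [one_div_tn, sin_shift]
  ring

lemma a_nonneg (n : ℕ) : (0 : ℝ) ≤ tn n * (1 - tn n) :=
  mul_nonneg (tn_pos n).le (by linarith [tn_le n])

lemma key (n : ℕ) :
    ENNReal.ofReal (1 / (20 * ((n : ℝ) + 1))) ≤ edist (gg (tn n)) (gg (tn (n + 1))) := by
  rw [edist_dist, Real.dist_eq]
  apply ENNReal.ofReal_le_ofReal
  have h1 : gg (tn n) - gg (tn (n + 1))
      = (-1) ^ n * (tn n * (1 - tn n) + tn (n + 1) * (1 - tn (n + 1))) := by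
    rw [gg_tn, gg_tn, pow_succ]; ring
  have hsum : (0 : ℝ) ≤ tn n * (1 - tn n) + tn (n + 1) * (1 - tn (n + 1)) := by
    linarith [a_nonneg n, a_nonneg (n + 1)]
  rw [h1, abs_mul, abs_pow, abs_neg, abs_one, one_pow, one_mul, abs_of_nonneg hsum]
  have h2 : tn n / 3 ≤ tn n * (1 - tn n) := by
    nlinarith [tn_le n, tn_pos n]
  have h3 : 1 / (20 * ((n : ℝ) + 1)) ≤ tn n / 3 := by
    unfold tn
    rw [div_div, div_le_div_iff₀ (by positivity)
      (by have := Real.pi_pos; positivity)]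
    have h4 := Real.pi_le_four
    have h5 := Real.pi_pos
    have h6 : (0 : ℝ) ≤ (n : ℝ) := Nat.cast_nonneg n
    nlinarith
  linarith [a_nonneg (n + 1)]

lemma gg_evar : eVariationOn gg (Set.Icc 0 1) = ⊤ := by
  have tn_mem : ∀ m : ℕ, tn m ∈ Set.Icc (0 : ℝ) 1 :=
    fun m => ⟨(tn_pos m).le, (tn_le m).trans (by norm_num)⟩
  have main : ∀ N : ℕ,
      ENNReal.ofReal (∑ i ∈ Finset.range N, 1 / (20 * ((i : ℝ) + 1)))
        ≤ eVariationOn gg (Set.Icc 0 1) := by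
    intro N
    set u : ℕ → ℝ := fun i => tn (N - i) with hu
    have humono : Monotone u := fun i j hij => tn_anti (Nat.sub_le_sub_left hij N)
    have hsum := eVariationOn.sum_le (f := gg) (n := N) humono (fun i => tn_mem _)
    refine le_trans ?_ hsum
    rw [ENNReal.ofReal_sum_of_nonneg (fun i _ => by positivity)]
    rw [← Finset.sum_range_reflect
      (fun i => ENNReal.ofReal (1 / (20 * ((i : ℝ) + 1)))) N]
    apply Finset.sum_le_sum
    intro i hi
    have hi' := Finset.mem_range.1 hi
    have e1 : N - (i + 1) = N - 1 - i := by omega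
    have e2 : N - i = (N - 1 - i) + 1 := by omega
    simp only [hu, e1, e2]
    exact key (N - 1 - i)
  by_contra hV
  set V := eVariationOn gg (Set.Icc 0 1) with hVdef
  obtain ⟨N, hN⟩ := (Filter.tendsto_atTop.1
    Real.tendsto_sum_range_one_div_nat_succ_atTop (20 * (V.toReal + 1))).exists
  have hle : ENNReal.ofReal (V.toReal + 1) ≤ V := by
    refine le_trans ?_ (main N)
    apply ENNReal.ofReal_le_ofReal
    have he : ∑ i ∈ Finset.range N, 1 / (20 * ((i : ℝ) + 1))
        = (1 / 20) * ∑ i ∈ Finset.range N, (1 / ((i : ℝ) + 1)) := by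
      rw [Finset.mul_sum]
      apply Finset.sum_congr rfl
      intro i _
      rw [div_mul_div_comm, one_mul]
    rw [he]
    linarith
  have h2 : V < ENNReal.ofReal (V.toReal + 1) :=
    (ENNReal.lt_ofReal_iff_toReal_lt hV).2 (by linarith)
  exact absurd (lt_of_lt_of_le h2 hle) (lt_irrefl V)

noncomputable def ff (t : ℝ) : ℝ² := (WithLp.equiv 2 (Fin 2 → ℝ)).symm ![t, gg t]

lemma coord_le_norm (x : ℝ²) (i : Fin 2) : |x i| ≤ ‖x‖ := by
  rw [EuclideanSpace.norm_eq, ← Real.sqrt_sq_eq_abs]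
  apply Real.sqrt_le_sqrt
  calc (x i) ^ 2 = ‖x i‖ ^ 2 := by rw [Real.norm_eq_abs, sq_abs]
    _ ≤ ∑ j, ‖x j‖ ^ 2 :=
      Finset.single_le_sum (f := fun j => ‖x j‖ ^ 2) (fun j _ => sq_nonneg _)
        (Finset.mem_univ i)

lemma ff_dist (t₁ t₂ : ℝ) : |t₁ - t₂| ≤ ‖ff t₁ - ff t₂‖ := by
  have h := coord_le_norm (ff t₁ - ff t₂) 0
  have h0 : (ff t₁ - ff t₂) 0 = t₁ - t₂ := rfl
  rwa [h0] at h

lemma gg_cont : Continuous gg := by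
  rw [continuous_iff_continuousAt]
  intro t
  rcases eq_or_ne t 0 with rfl | ht
  · have h0 : gg 0 = 0 := by simp [gg]
    unfold ContinuousAt
    rw [h0]
    apply squeeze_zero_norm (a := fun s : ℝ => |s| * (1 + |s|))
    · intro s
      have h1 : |1 - s| ≤ 1 + |s| := by
        rcases abs_cases (1 - s) with ⟨h, _⟩ | ⟨h, _⟩ <;>
          rcases abs_cases s with ⟨h', _⟩ | ⟨h', _⟩ <;> linarith
      have hnorm : ‖gg s‖ = |s| * |1 - s| * |Real.sin (1 / s)| := by
        rw [Real.norm_eq_abs]; unfold gg; rw [abs_mul, abs_mul]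
      rw [hnorm]
      calc |s| * |1 - s| * |Real.sin (1 / s)| ≤ |s| * |1 - s| * 1 := by
            apply mul_le_mul_of_nonneg_left (abs_le.2 ⟨Real.neg_one_le_sin _, Real.sin_le_one _⟩)
            positivity
        _ = |s| * |1 - s| := by ring
        _ ≤ |s| * (1 + |s|) := mul_le_mul_of_nonneg_left h1 (abs_nonneg s)
    · have hc : Continuous (fun s : ℝ => |s| * (1 + |s|)) :=
        continuous_abs.mul (continuous_const.add continuous_abs)
      simpa using hc.tendsto 0
  · unfold gg
    exact (continuousAt_id.mul (continuousAt_const.sub continuousAt_id)).mul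
      (Real.continuous_sin.continuousAt.comp (continuousAt_const.div continuousAt_id ht))

lemma ff_cont : Continuous ff := by
  have h1 : Continuous (fun t : ℝ => ![t, gg t]) := by
    apply continuous_pi
    intro i
    fin_cases i
    · simpa using continuous_id'
    · simpa using gg_cont
  exact (PiLp.continuous_toLp 2 (fun _ : Fin 2 => ℝ)).comp h1

lemma lip : LipschitzWith 1 (fun x : ℝ² => x 1) := by
  apply LipschitzWith.of_dist_le_mul
  intro x y
  rw [NNReal.coe_one, one_mul, Real.dist_eq, dist_eq_norm]
  have h : x 1 - y 1 = (x - y) 1 := rfl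
  rw [h]
  exact coord_le_norm _ 1

/-- Theorem 2.2 (geometric content): there is a simple arc of infinite length from
`(0,0)` to `(1,0)` admitting a parametrization that is bi-Lipschitz from below. -/
theorem stmt_7 :
    ∃ f : ℝ → ℝ², Set.InjOn f (Set.Icc 0 1) ∧ ContinuousOn f (Set.Icc 0 1) ∧
      f 0 = (WithLp.equiv 2 (Fin 2 → ℝ)).symm ![0, 0] ∧
      f 1 = (WithLp.equiv 2 (Fin 2 → ℝ)).symm ![1, 0] ∧
      (∀ t₁ ∈ Set.Icc (0 : ℝ) 1, ∀ t₂ ∈ Set.Icc (0 : ℝ) 1,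
        ‖f t₁ - f t₂‖ ≥ |t₁ - t₂| / 3) ∧
      eVariationOn f (Set.Icc 0 1) = ⊤ := by
  refine ⟨ff, ?_, ff_cont.continuousOn, ?_, ?_, ?_, ?_⟩
  · intro a _ b _ hab
    have h := ff_dist a b
    rw [hab, sub_self, norm_zero] at h
    have h2 : a - b = 0 := abs_eq_zero.1 (le_antisymm h (abs_nonneg _))
    linarith
  · unfold ff
    congr 1
    have : gg 0 = 0 := by simp [gg]
    rw [this]
  · unfold ff
    congr 1
    have : gg 1 = 0 := by simp [gg]
    rw [this]
  · intro t₁ _ t₂ _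
    have h := ff_dist t₁ t₂
    have h2 := abs_nonneg (t₁ - t₂)
    linarith
  · have hcomp := (lip.lipschitzOnWith (s := Set.univ)).comp_eVariationOn_le
      (g := ff) (s := Set.Icc 0 1) (Set.mapsTo_univ _ _)
    have hg : (fun x : ℝ² => x 1) ∘ ff = gg := by
      funext t
      rfl
    rw [hg, gg_evar] at hcomp
    simpa using (top_le_iff.1 (le_trans hcomp (by simp)))
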